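/- For square matrices A and B of the same order over an idempotent commutative semiring and any positive integer m, the binomial identity (A ⊕ B)^m = (⊕ over k from 1 to m, ⊕ over nonnegative integers i_0, i_1, …, i_k with i_0 + i_1 + ⋯ + i_k = m − k of B^{i_0} A B^{i_1} ⋯ A B^{i_k}) ⊕ B^m holds. -/

import Mathlib

open Finset

section Aux

variable {M : Type*}

lemma sum_adt_succ [AddCommMonoid M] (k n : ℕ) (h : (Fin (k + 1) → ℕ) → M) :
    ∑ f ∈ Finset.Nat.antidiagonalTuple (k + 1) n, h f =
      ∑ p ∈ Finset.HasAntidiagonal.antidiagonal n, ∑ g ∈ Finset.Nat.antidiagonalTuple k p.2,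
        h (Fin.cons p.1 g) := by
  rw [Finset.sum_sigma']
  refine Finset.sum_nbij'
    (i := fun f => (⟨(f 0, ∑ i : Fin k, f i.succ), fun i => f i.succ⟩ :
      Σ _p : ℕ × ℕ, Fin k → ℕ))
    (j := fun x => Fin.cons x.1.1 x.2) ?_ ?_ ?_ ?_ ?_
  · intro f hf
    rw [Finset.Nat.mem_antidiagonalTuple, Fin.sum_univ_succ] at hf
    simp only [Finset.mem_sigma, Finset.HasAntidiagonal.mem_antidiagonal,
      Finset.Nat.mem_antidiagonalTuple]
    exact ⟨hf, trivial⟩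
  · intro x hx
    simp only [Finset.mem_sigma, Finset.HasAntidiagonal.mem_antidiagonal,
      Finset.Nat.mem_antidiagonalTuple] at hx
    rw [Finset.Nat.mem_antidiagonalTuple, Fin.sum_cons, hx.2, hx.1]
  · intro f _
    funext i
    refine Fin.cases rfl (fun i => ?_) i
    simp
  · intro x hx
    simp only [Finset.mem_sigma, Finset.mem_antidiagonal,
      Finset.Nat.mem_antidiagonalTuple] at hx
    obtain ⟨⟨a, b⟩, g⟩ := x
    simp only at hx
    simp only [Fin.cons_zero, Fin.cons_succ]
    rw [hx.2]
  · intro f hf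
    congr 1
    funext i
    refine Fin.cases rfl (fun i => ?_) i
    simp

variable [Semiring M] (A B : M)

/-- the word `B^{f 0} A B^{f 1} ⋯ A B^{f k}`. -/
def wrd (k : ℕ) (f : Fin (k + 1) → ℕ) : M :=
  B ^ f 0 * (List.ofFn fun t : Fin k => A * B ^ f t.succ).prod

/-- sum of all words with `j` occurrences of `A` and total degree `m`. -/
def Tb (j m : ℕ) : M :=
  ∑ g ∈ Finset.Nat.antidiagonalTuple (j + 1) (m - j), wrd A B j g

lemma wrd_cons_zero (k : ℕ) (g : Fin (k + 1) → ℕ) :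
    wrd A B (k + 1) (Fin.cons 0 g) = A * wrd A B k g := by
  simp only [wrd, Fin.cons_zero, Fin.cons_succ, pow_zero, one_mul, List.ofFn_succ,
    List.prod_cons, mul_assoc]

lemma wrd_cons_succ (k j : ℕ) (g : Fin k → ℕ) :
    wrd A B k (Fin.cons (j + 1) g) = B * wrd A B k (Fin.cons j g) := by
  simp only [wrd, Fin.cons_zero, Fin.cons_succ, pow_succ', mul_assoc]

lemma Tb_zero (m : ℕ) : Tb A B 0 m = B ^ m := by
  simp only [Tb, Nat.sub_zero, Finset.Nat.antidiagonalTuple_one, Finset.sum_singleton,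
    wrd, List.ofFn_zero, List.prod_nil, mul_one]
  simp

lemma Tb_succ (k m : ℕ) (hk : k + 1 ≤ m) :
    Tb A B (k + 1) (m + 1) = A * Tb A B k m + B * Tb A B (k + 1) m := by
  have h1 : m + 1 - (k + 1) = (m - (k + 1)) + 1 := by omega
  have h2 : m - k = (m - (k + 1)) + 1 := by omega
  rw [Tb, h1, sum_adt_succ, Finset.Nat.antidiagonal_succ, Finset.sum_cons,
    Finset.sum_map]
  simp only [Function.Embedding.coe_prodMap, Function.Embedding.coeFn_mk,
    Function.Embedding.refl_apply, Prod.map_fst, Prod.map_snd, id_eq]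
  have hA : ∑ g ∈ Finset.Nat.antidiagonalTuple (k + 1) (m - (k + 1) + 1),
      wrd A B (k + 1) (Fin.cons 0 g) = A * Tb A B k m := by
    rw [Tb, h2, Finset.mul_sum]
    exact Finset.sum_congr rfl fun g _ => wrd_cons_zero A B k g
  have hB : ∑ p ∈ Finset.HasAntidiagonal.antidiagonal (m - (k + 1)),
      ∑ g ∈ Finset.Nat.antidiagonalTuple (k + 1) p.2,
        wrd A B (k + 1) (Fin.cons p.1.succ g)
      = B * Tb A B (k + 1) m := by
    rw [Tb, sum_adt_succ, Finset.mul_sum]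
    refine Finset.sum_congr rfl fun p _ => ?_
    rw [Finset.mul_sum]
    exact Finset.sum_congr rfl fun g _ => wrd_cons_succ A B (k + 1) p.1 g
  rw [hA, hB]

lemma zero_eq_cons (k : ℕ) : (0 : Fin (k + 1) → ℕ) = Fin.cons 0 0 := by
  funext i
  refine Fin.cases rfl (fun i => ?_) i
  simp

lemma Tb_top (m : ℕ) : Tb A B (m + 1) (m + 1) = A * Tb A B m m := by
  rw [Tb, Tb, Nat.sub_self, Nat.sub_self, Finset.Nat.antidiagonalTuple_zero_right,
    Finset.Nat.antidiagonalTuple_zero_right, Finset.sum_singleton, Finset.sum_singleton,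
    zero_eq_cons, wrd_cons_zero]

/-- the claimed right-hand side. -/
def Srhs (m : ℕ) : M := (∑ k ∈ Finset.Icc 1 m, Tb A B k m) + B ^ m

lemma Icc_sum_eq (m : ℕ) (g : ℕ → M) :
    ∑ k ∈ Finset.Icc 1 m, g k = ∑ j ∈ Finset.range m, g (j + 1) := by
  rw [← Finset.Ico_add_one_right_eq_Icc, Finset.sum_Ico_eq_sum_range]
  simp [add_comm]

lemma Srhs_succ (m : ℕ) (hm : 1 ≤ m) :
    Srhs A B (m + 1) = (A + B) * Srhs A B m := by
  have e1 : ∑ k ∈ Finset.Icc 1 (m + 1), Tb A B k (m + 1)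
      = ∑ j ∈ Finset.range (m + 1), Tb A B (j + 1) (m + 1) := Icc_sum_eq _ _
  have e2 : ∑ k ∈ Finset.Icc 1 m, Tb A B k m
      = ∑ j ∈ Finset.range m, Tb A B (j + 1) m := Icc_sum_eq _ _
  have e3 : ∑ j ∈ Finset.range (m + 1), Tb A B (j + 1) (m + 1)
      = A * (∑ i ∈ Finset.range (m + 1), Tb A B i m)
        + B * ∑ j ∈ Finset.range m, Tb A B (j + 1) m := by
    rw [Finset.sum_range_succ, Tb_top,
      Finset.sum_congr rfl (fun j hj => Tb_succ A B j m (Finset.mem_range.mp hj)),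
      Finset.sum_add_distrib, ← Finset.mul_sum, ← Finset.mul_sum,
      Finset.sum_range_succ (fun i => Tb A B i m) m, mul_add]
    abel
  have e4 : ∑ i ∈ Finset.range (m + 1), Tb A B i m
      = B ^ m + ∑ j ∈ Finset.range m, Tb A B (j + 1) m := by
    rw [Finset.sum_range_succ', Tb_zero, add_comm]
  rw [Srhs, Srhs, e1, e2, e3, e4, pow_succ', mul_add, add_mul, mul_add, mul_add]
  abel

lemma pow_eq_Srhs (m : ℕ) (hm : 1 ≤ m) : (A + B) ^ m = Srhs A B m := by
  induction m, hm using Nat.le_induction with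
  | base =>
    rw [Srhs, pow_one, Finset.Icc_self, Finset.sum_singleton]
    have : Tb A B 1 1 = A := by
      rw [show (1 : ℕ) = 0 + 1 from rfl, Tb_top, Tb_zero, pow_zero, mul_one]
    rw [this, pow_one]
  | succ m hm ih =>
    rw [pow_succ', ih, Srhs_succ A B m hm]

end Aux

/-- Binomial identity for square matrices over an idempotent commutative semiring:
`(A ⊕ B)^m = ⊕_{k=1}^m ⊕_{i₀+⋯+i_k = m-k} B^{i₀} A B^{i₁} ⋯ A B^{i_k} ⊕ B^m`. -/
theorem stmt8 {R : Type*} [CommSemiring R] (hid : ∀ a : R, a + a = a) {n : ℕ}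
    (A B : Matrix (Fin n) (Fin n) R) (m : ℕ) (hm : 0 < m) :
    (A + B) ^ m =
      (∑ k ∈ Finset.Icc 1 m,
        ∑ f ∈ (Fintype.piFinset fun _ : Fin (k + 1) => Finset.range (m + 1)).filter
            (fun f => ∑ t, f t = m - k),
          B ^ (f 0) * (List.ofFn fun t : Fin k => A * B ^ (f t.succ)).prod)
      + B ^ m := by
  have hsets : ∀ k ∈ Finset.Icc 1 m,
      (Fintype.piFinset fun _ : Fin (k + 1) => Finset.range (m + 1)).filter
        (fun f => ∑ t, f t = m - k) = Finset.Nat.antidiagonalTuple (k + 1) (m - k) := by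
    intro k hk
    ext f
    simp only [Finset.mem_filter, Fintype.mem_piFinset, Finset.mem_range,
      Finset.Nat.mem_antidiagonalTuple, Nat.lt_succ_iff]
    constructor
    · exact fun h => h.2
    · intro h
      refine ⟨fun t => ?_, h⟩
      calc f t ≤ ∑ t, f t :=
            Finset.single_le_sum (fun i _ => Nat.zero_le _) (Finset.mem_univ t)
        _ = m - k := h
        _ ≤ m := Nat.sub_le _ _
  have : (∑ k ∈ Finset.Icc 1 m,
      ∑ f ∈ (Fintype.piFinset fun _ : Fin (k + 1) => Finset.range (m + 1)).filter
          (fun f => ∑ t, f t = m - k),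
        B ^ (f 0) * (List.ofFn fun t : Fin k => A * B ^ (f t.succ)).prod)
      = ∑ k ∈ Finset.Icc 1 m, Tb A B k m := by
    refine Finset.sum_congr rfl fun k hk => ?_
    rw [hsets k hk]
    rfl
  rw [this]
  exact pow_eq_Srhs A B m hm
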